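/- For every real n ≥ 6: sin(π/n)·sin(5π/n) < sin(2π/n)² if 6 ≤ n < 12, sin(π/n)·sin(5π/n) = sin(2π/n)² if n = 12, and sin(π/n)·sin(5π/n) > sin(2π/n)² if n > 12; equivalently, D^(n)((1,4)) is less than, equal to, or greater than D^(n)((2,2)) according as n < 12, n = 12, or n > 12. Moreover the ratio D^(n)((1,4))/D^(n)((2,2)) is a strictly increasing function of the real variable n on [6,∞). -/
import Mathlib


noncomputable section

/-- The SU(3) quantum dimension `D⁽ⁿ⁾((a,b))` for a real height `n`. -/
def qdimR (n a b : ℝ) : ℝ :=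
  (Real.sin (Real.pi * a / n) * Real.sin (Real.pi * b / n) *
      Real.sin (Real.pi * (a + b) / n)) /
    (Real.sin (Real.pi / n) ^ 2 * Real.sin (2 * Real.pi / n))

lemma sin5_eq (x : ℝ) :
    Real.sin (5*x) = Real.sin x * (16*(Real.cos x)^4 - 12*(Real.cos x)^2 + 1) := by
  have h4s : Real.sin (4*x) = 2*Real.sin (2*x) * Real.cos (2*x) := by
    rw [show (4:ℝ)*x = 2*(2*x) by ring, Real.sin_two_mul]
  have h4c : Real.cos (4*x) = 2*(Real.cos (2*x))^2 - 1 := by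
    rw [show (4:ℝ)*x = 2*(2*x) by ring, Real.cos_two_mul]
  have h5 : Real.sin (5*x) = Real.sin x * Real.cos (4*x) + Real.cos x * Real.sin (4*x) := by
    rw [show (5:ℝ)*x = x + 4*x by ring, Real.sin_add]
  rw [h5, h4s, h4c, Real.sin_two_mul, Real.cos_two_mul]; ring

lemma sin2sq (x : ℝ) : Real.sin (2*x)^2 = 4 * Real.sin x^2 * Real.cos x^2 := by
  rw [Real.sin_two_mul]; ring

lemma basicfacts (n : ℝ) (hn : 6 ≤ n) :
    0 < Real.pi/n ∧ Real.pi/n ≤ Real.pi/6 ∧ 0 < Real.sin (Real.pi/n) ∧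
    Real.sqrt 3 / 2 ≤ Real.cos (Real.pi/n) ∧ 3/4 ≤ Real.cos (Real.pi/n)^2 ∧
    0 < Real.sin (2*(Real.pi/n)) ∧ 0 < Real.sin (4*(Real.pi/n)) := by
  have hn0 : (0:ℝ) < n := by linarith
  have hx0 : 0 < Real.pi/n := div_pos Real.pi_pos hn0
  have hx6 : Real.pi/n ≤ Real.pi/6 :=
    div_le_div_of_nonneg_left Real.pi_pos.le (by norm_num) hn
  have hxpi : Real.pi/n < Real.pi := by nlinarith [Real.pi_pos]
  have hs : 0 < Real.sin (Real.pi/n) := Real.sin_pos_of_pos_of_lt_pi hx0 hxpi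
  have hc6 : Real.cos (Real.pi/6) ≤ Real.cos (Real.pi/n) :=
    Real.cos_le_cos_of_nonneg_of_le_pi hx0.le (by linarith [Real.pi_pos]) hx6
  rw [Real.cos_pi_div_six] at hc6
  have hsq3 : Real.sqrt 3 ^ 2 = 3 := Real.sq_sqrt (by norm_num)
  have hcsq : 3/4 ≤ Real.cos (Real.pi/n)^2 := by
    have h0 : (0:ℝ) ≤ Real.sqrt 3 / 2 := by positivity
    nlinarith [mul_le_mul hc6 hc6 h0 (le_trans h0 hc6), hsq3]
  refine ⟨hx0, hx6, hs, hc6, hcsq, ?_, ?_⟩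
  · exact Real.sin_pos_of_pos_of_lt_pi (by linarith) (by nlinarith [Real.pi_pos])
  · exact Real.sin_pos_of_pos_of_lt_pi (by linarith) (by nlinarith [Real.pi_pos])

lemma cos12sq : Real.cos (Real.pi/12)^2 = (2 + Real.sqrt 3)/4 := by
  rw [Real.cos_sq, show 2*(Real.pi/12) = Real.pi/6 by ring, Real.cos_pi_div_six]; ring

/-- strict monotonicity of `cos(π/n)²` in `n` on `[6,∞)` -/
lemma cossq_strict (a b : ℝ) (ha : 6 ≤ a) (hb : 6 ≤ b) (hab : a < b) :
    Real.cos (Real.pi/a)^2 < Real.cos (Real.pi/b)^2 := by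
  obtain ⟨ha0, ha6, -, hca, -, -, -⟩ := basicfacts a ha
  obtain ⟨hb0, hb6, -, hcb, -, -, -⟩ := basicfacts b hb
  have hlt : Real.pi/b < Real.pi/a :=
    div_lt_div_of_pos_left Real.pi_pos (by linarith) hab
  have hcos : Real.cos (Real.pi/a) < Real.cos (Real.pi/b) :=
    Real.strictAntiOn_cos ⟨hb0.le, by linarith [Real.pi_pos]⟩
      ⟨ha0.le, by linarith [Real.pi_pos]⟩ hlt
  have h0 : 0 ≤ Real.cos (Real.pi/a) := by
    have : (0:ℝ) ≤ Real.sqrt 3 / 2 := by positivity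
    linarith
  exact pow_lt_pow_left₀ hcos h0 two_ne_zero

lemma Qneg (t : ℝ) (h1 : 3/4 ≤ t) (h2 : t < (2 + Real.sqrt 3)/4) :
    16*t^2 - 16*t + 1 < 0 := by
  have hsq3 : Real.sqrt 3 ^ 2 = 3 := Real.sq_sqrt (by norm_num)
  have hs3 : (1:ℝ) ≤ Real.sqrt 3 := by nlinarith [Real.sqrt_nonneg 3]
  nlinarith [mul_pos (sub_pos.2 h2) (show (0:ℝ) < t - (2 - Real.sqrt 3)/4 by nlinarith)]

lemma Qpos (t : ℝ) (h1 : 3/4 ≤ t) (h2 : (2 + Real.sqrt 3)/4 < t) :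
    0 < 16*t^2 - 16*t + 1 := by
  have hsq3 : Real.sqrt 3 ^ 2 = 3 := Real.sq_sqrt (by norm_num)
  have hs3 : (1:ℝ) ≤ Real.sqrt 3 := by nlinarith [Real.sqrt_nonneg 3]
  nlinarith [mul_pos (sub_pos.2 h2) (show (0:ℝ) < t - (2 - Real.sqrt 3)/4 by nlinarith)]

lemma Qzero : 16*(Real.cos (Real.pi/12)^2)^2 - 16*Real.cos (Real.pi/12)^2 + 1 = 0 := by
  rw [cos12sq]
  have hsq3 : Real.sqrt 3 ^ 2 = 3 := Real.sq_sqrt (by norm_num)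
  nlinarith [hsq3]

lemma key_diff (n : ℝ) :
    Real.sin (Real.pi/n) * Real.sin (5*Real.pi/n) - Real.sin (2*Real.pi/n)^2
      = Real.sin (Real.pi/n)^2 *
        (16*Real.cos (Real.pi/n)^4 - 16*Real.cos (Real.pi/n)^2 + 1) := by
  rw [show 5*Real.pi/n = 5*(Real.pi/n) by ring, show 2*Real.pi/n = 2*(Real.pi/n) by ring,
    sin5_eq, sin2sq]; ring

lemma qdim14 (n : ℝ) : qdimR n 1 4 =
    (Real.sin (Real.pi/n) * Real.sin (4*(Real.pi/n)) * Real.sin (5*(Real.pi/n))) /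
      (Real.sin (Real.pi/n)^2 * Real.sin (2*(Real.pi/n))) := by
  unfold qdimR
  rw [show Real.pi*1/n = Real.pi/n by ring, show Real.pi*4/n = 4*(Real.pi/n) by ring,
    show Real.pi*(1+4)/n = 5*(Real.pi/n) by ring, show 2*Real.pi/n = 2*(Real.pi/n) by ring]

lemma qdim22 (n : ℝ) : qdimR n 2 2 =
    (Real.sin (2*(Real.pi/n)) * Real.sin (2*(Real.pi/n)) * Real.sin (4*(Real.pi/n))) /
      (Real.sin (Real.pi/n)^2 * Real.sin (2*(Real.pi/n))) := by
  unfold qdimR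
  rw [show Real.pi*2/n = 2*(Real.pi/n) by ring,
    show Real.pi*(2+2)/n = 4*(Real.pi/n) by ring, show 2*Real.pi/n = 2*(Real.pi/n) by ring]

/-- numerator difference -/
lemma num_diff (n : ℝ) :
    Real.sin (Real.pi/n) * Real.sin (4*(Real.pi/n)) * Real.sin (5*(Real.pi/n)) -
      Real.sin (2*(Real.pi/n)) * Real.sin (2*(Real.pi/n)) * Real.sin (4*(Real.pi/n))
    = Real.sin (4*(Real.pi/n)) * (Real.sin (Real.pi/n)^2 *
        (16*Real.cos (Real.pi/n)^4 - 16*Real.cos (Real.pi/n)^2 + 1)) := by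
  have h2 : Real.sin (2*(Real.pi/n)) * Real.sin (2*(Real.pi/n)) =
      Real.sin (2*(Real.pi/n))^2 := by ring
  rw [h2, sin5_eq, sin2sq]; ring

lemma ratio_eq (n : ℝ) (hn : 6 ≤ n) :
    qdimR n 1 4 / qdimR n 2 2 =
      (16*(Real.cos (Real.pi/n)^2)^2 - 12*Real.cos (Real.pi/n)^2 + 1) /
        (4*Real.cos (Real.pi/n)^2) := by
  obtain ⟨hx0, hx6, hs, hc3, hcsq, hs2, hs4⟩ := basicfacts n hn
  have hc : 0 < Real.cos (Real.pi/n) := by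
    have : (0:ℝ) < Real.sqrt 3 / 2 := by positivity
    linarith
  rw [qdim14, qdim22, sin5_eq, Real.sin_two_mul]
  have hD' : Real.sin (Real.pi/n)^2 * (2 * Real.sin (Real.pi/n) * Real.cos (Real.pi/n)) ≠ 0 := by
    intro h
    nlinarith [hs, hc, mul_pos (pow_pos hs 2) (mul_pos (mul_pos two_pos hs) hc)]
  rw [div_div_div_cancel_right₀ hD']
  have h2sc : 0 < 2 * Real.sin (Real.pi/n) * Real.cos (Real.pi/n) :=
    mul_pos (mul_pos two_pos hs) hc
  have hB : 2 * Real.sin (Real.pi/n) * Real.cos (Real.pi/n) *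
      (2 * Real.sin (Real.pi/n) * Real.cos (Real.pi/n)) * Real.sin (4*(Real.pi/n)) ≠ 0 :=
    (mul_pos (mul_pos h2sc h2sc) hs4).ne'
  have hB2 : (4:ℝ) * Real.cos (Real.pi/n)^2 ≠ 0 := by positivity
  rw [div_eq_div_iff hB hB2]
  ring

theorem statement18 :
    (∀ n : ℝ, 6 ≤ n →
      ((n < 12 → Real.sin (Real.pi / n) * Real.sin (5 * Real.pi / n) <
          Real.sin (2 * Real.pi / n) ^ 2 ∧ qdimR n 1 4 < qdimR n 2 2) ∧
       (n = 12 → Real.sin (Real.pi / n) * Real.sin (5 * Real.pi / n) =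
          Real.sin (2 * Real.pi / n) ^ 2 ∧ qdimR n 1 4 = qdimR n 2 2) ∧
       (12 < n → Real.sin (Real.pi / n) * Real.sin (5 * Real.pi / n) >
          Real.sin (2 * Real.pi / n) ^ 2 ∧ qdimR n 1 4 > qdimR n 2 2))) ∧
    StrictMonoOn (fun n : ℝ => qdimR n 1 4 / qdimR n 2 2) (Set.Ici 6) := by
  constructor
  · intro n hn
    obtain ⟨hx0, hx6, hs, hc3, hcsq, hs2, hs4⟩ := basicfacts n hn
    have hD : 0 < Real.sin (Real.pi/n)^2 * Real.sin (2*(Real.pi/n)) := by positivity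
    have hD' : Real.sin (Real.pi/n)^2 * Real.sin (2*(Real.pi/n)) ≠ 0 := ne_of_gt hD
    set Q := 16*Real.cos (Real.pi/n)^4 - 16*Real.cos (Real.pi/n)^2 + 1 with hQdef
    have hQt : Q = 16*(Real.cos (Real.pi/n)^2)^2 - 16*Real.cos (Real.pi/n)^2 + 1 := by
      rw [hQdef]; ring
    refine ⟨?_, ?_, ?_⟩
    · intro h12
      have htlt : Real.cos (Real.pi/n)^2 < (2 + Real.sqrt 3)/4 := by
        have := cossq_strict n 12 hn (by norm_num) h12
        rwa [cos12sq] at this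
      have hQ : Q < 0 := by rw [hQt]; exact Qneg _ hcsq htlt
      have hsin : Real.sin (Real.pi / n) * Real.sin (5 * Real.pi / n) <
          Real.sin (2 * Real.pi / n) ^ 2 := by
        nlinarith [key_diff n, mul_neg_of_pos_of_neg (pow_pos hs 2) hQ]
      refine ⟨hsin, ?_⟩
      rw [qdim14, qdim22, div_lt_div_iff₀ hD hD]
      nlinarith [num_diff n, mul_neg_of_pos_of_neg (mul_pos hs4 (pow_pos hs 2)) hQ, hD]
    · intro h12
      subst h12
      have hQ : Q = 0 := by rw [hQt]; exact Qzero
      have hQ0 : 16*Real.cos (Real.pi/12)^4 - 16*Real.cos (Real.pi/12)^2 + 1 = 0 := by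
        rw [← hQdef]; exact hQ
      have hsin : Real.sin (Real.pi / 12) * Real.sin (5 * Real.pi / 12) =
          Real.sin (2 * Real.pi / 12) ^ 2 := by
        have h1 := key_diff 12
        have h2 : Real.sin (Real.pi/12)^2 *
            (16*Real.cos (Real.pi/12)^4 - 16*Real.cos (Real.pi/12)^2 + 1) = 0 := by
          rw [hQ0]; ring
        linarith
      refine ⟨hsin, ?_⟩
      rw [qdim14, qdim22]
      have hnum := num_diff 12
      have h3 : Real.sin (4*(Real.pi/12)) * (Real.sin (Real.pi/12)^2 *
          (16*Real.cos (Real.pi/12)^4 - 16*Real.cos (Real.pi/12)^2 + 1)) = 0 := by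
        rw [hQ0]; ring
      have : Real.sin (Real.pi/12) * Real.sin (4*(Real.pi/12)) * Real.sin (5*(Real.pi/12)) =
          Real.sin (2*(Real.pi/12)) * Real.sin (2*(Real.pi/12)) * Real.sin (4*(Real.pi/12)) := by
        linarith
      rw [this]
    · intro h12
      have htlt : (2 + Real.sqrt 3)/4 < Real.cos (Real.pi/n)^2 := by
        have := cossq_strict 12 n (by norm_num) hn h12
        rwa [cos12sq] at this
      have hQ : 0 < Q := by rw [hQt]; exact Qpos _ hcsq htlt
      have hsin : Real.sin (2 * Real.pi / n) ^ 2 <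
          Real.sin (Real.pi / n) * Real.sin (5 * Real.pi / n) := by
        nlinarith [key_diff n, mul_pos (pow_pos hs 2) hQ]
      refine ⟨hsin, ?_⟩
      rw [qdim14, qdim22, gt_iff_lt, div_lt_div_iff₀ hD hD]
      nlinarith [num_diff n, mul_pos (mul_pos hs4 (pow_pos hs 2)) hQ]
  · intro a ha b hb hab
    simp only [Set.mem_Ici] at ha hb
    simp only []
    rw [ratio_eq a ha, ratio_eq b hb]
    set t₁ := Real.cos (Real.pi/a)^2 with ht1
    set t₂ := Real.cos (Real.pi/b)^2 with ht2
    have h12 : t₁ < t₂ := cossq_strict a b ha hb hab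
    have h34 : 3/4 ≤ t₁ := (basicfacts a ha).2.2.2.2.1
    rw [div_lt_div_iff₀ (by nlinarith) (by nlinarith)]
    nlinarith [mul_pos (sub_pos.2 h12) (show (0:ℝ) < 16*t₁*t₂ - 1 by nlinarith)]
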